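/- (Classical Blackwell theorem.) Let (N, S, p) and (N, T, q) be two classical information structures. Then (N, S, p) is better than (N, T, q) if and only if there exists a stochastic matrix F = (f_{s,t})_{s∈S,t∈T} (i.e. f_{s,t} ≥ 0 and Σ_t f_{s,t} = 1 for every s ∈ S) such that q_{n,t} = Σ_s p_{n,s} f_{s,t} for every n ∈ N and t ∈ T. -/

import Mathlib

open BigOperators

/-- `p` is a probability distribution on the finite type `ι`. -/
def IsDist {ι : Type} [Fintype ι] (p : ι → ℝ) : Prop :=
  (∀ x, 0 ≤ p x) ∧ ∑ x, p x = 1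

/-- The value of the classical game with action set `Fin k` and payoffs `M`
over the information structure `(N, S, p)`: the maximum, over all strategies
`g : S → Fin k`, of the expected payoff. -/
noncomputable def cValue {N S : Type} [Fintype N] [Fintype S] (p : N × S → ℝ)
    {k : ℕ} (M : Fin k → N → ℝ) : ℝ :=
  sSup {v : ℝ | ∃ g : S → Fin k, v = ∑ n, ∑ s, p (n, s) * M (g s) n}

/-- `(N, S, p)` is better than `(N, T, q)`: for every classical game, the value
over `(N, S, p)` is at least the value over `(N, T, q)`. -/
def ClBetter {N S T : Type} [Fintype N] [Fintype S] [Fintype T]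
    (p : N × S → ℝ) (q : N × T → ℝ) : Prop :=
  ∀ (k : ℕ) (M : Fin k → N → ℝ), cValue q M ≤ cValue p M


noncomputable def payoff {N S : Type} [Fintype N] [Fintype S] (p : N × S → ℝ)
    {k : ℕ} (M : Fin k → N → ℝ) (g : S → Fin k) : ℝ :=
  ∑ n, ∑ s, p (n, s) * M (g s) n

lemma cValue_eq_sSup {N S : Type} [Fintype N] [Fintype S] (p : N × S → ℝ)
    {k : ℕ} (M : Fin k → N → ℝ) :
    cValue p M = sSup (Set.range (payoff p M)) := by
  unfold cValue payoff Set.range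
  congr 1; ext v
  exact ⟨fun ⟨g, h⟩ => ⟨g, h.symm⟩, fun ⟨g, h⟩ => ⟨g, h.symm⟩⟩

lemma payoff_le_cValue {N S : Type} [Fintype N] [Fintype S] (p : N × S → ℝ)
    {k : ℕ} (M : Fin k → N → ℝ) (g : S → Fin k) :
    payoff p M g ≤ cValue p M := by
  rw [cValue_eq_sSup]
  exact le_csSup (Set.finite_range _).bddAbove ⟨g, rfl⟩

lemma cValue_le {N S : Type} [Fintype N] [Fintype S] (p : N × S → ℝ)
    {k : ℕ} (M : Fin k → N → ℝ) {v : ℝ} [Nonempty (S → Fin k)]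
    (h : ∀ g, payoff p M g ≤ v) : cValue p M ≤ v := by
  rw [cValue_eq_sSup]
  exact csSup_le (Set.range_nonempty _) (by rintro x ⟨g, rfl⟩; exact h g)

lemma nonempty_of_isDist {N S : Type} [Fintype N] [Fintype S] {p : N × S → ℝ}
    (hp : IsDist p) : Nonempty N ∧ Nonempty S := by
  constructor <;> by_contra h <;>
  · rw [not_nonempty_iff] at h
    have := hp.2
    simp [Finset.univ_eq_empty] at this

lemma easy_dir {N S T : Type} [Fintype N] [Fintype S] [Fintype T]
    (p : N × S → ℝ) (q : N × T → ℝ) (hp : IsDist p) (hq : IsDist q)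
    (f : S → T → ℝ) (hf0 : ∀ s t, 0 ≤ f s t) (hf1 : ∀ s, ∑ t, f s t = 1)
    (hfq : ∀ n t, q (n, t) = ∑ s, p (n, s) * f s t) : ClBetter p q := by
  obtain ⟨hN, hS⟩ := nonempty_of_isDist hp
  obtain ⟨-, hT⟩ := nonempty_of_isDist hq
  intro k M
  match k with
  | 0 =>
    haveI : IsEmpty (S → Fin 0) := ⟨fun g => (g (Classical.arbitrary S)).elim0⟩
    haveI : IsEmpty (T → Fin 0) := ⟨fun g => (g (Classical.arbitrary T)).elim0⟩
    rw [cValue_eq_sSup, cValue_eq_sSup, Set.range_eq_empty, Set.range_eq_empty]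
  | (k+1) =>
    apply cValue_le
    intro h
    -- d s t : conditional payoff
    set d : S → T → ℝ := fun s t => ∑ n, p (n, s) * M (h t) n with hd
    choose t₀ _ ht₀ using fun s : S =>
      Finset.exists_max_image Finset.univ (d s) ⟨Classical.arbitrary T, Finset.mem_univ _⟩
    have key : payoff q M h ≤ payoff p M (fun s => h (t₀ s)) := by
      unfold payoff
      calc ∑ n, ∑ t, q (n, t) * M (h t) n
          = ∑ s, ∑ t, f s t * d s t := by
            simp only [hfq, hd, Finset.sum_mul, Finset.mul_sum]
            calc ∑ n, ∑ t, ∑ s, p (n, s) * f s t * M (h t) n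
                = ∑ t, ∑ n, ∑ s, p (n, s) * f s t * M (h t) n := Finset.sum_comm
              _ = ∑ t, ∑ s, ∑ n, p (n, s) * f s t * M (h t) n :=
                  Finset.sum_congr rfl fun t _ => Finset.sum_comm
              _ = ∑ s, ∑ t, ∑ n, p (n, s) * f s t * M (h t) n := Finset.sum_comm
              _ = ∑ s, ∑ t, ∑ n, f s t * (p (n, s) * M (h t) n) := by
                  refine Finset.sum_congr rfl fun s _ => Finset.sum_congr rfl fun t _ =>
                    Finset.sum_congr rfl fun n _ => by ring
        _ ≤ ∑ s, ∑ t, f s t * d s (t₀ s) := by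
            refine Finset.sum_le_sum fun s _ => Finset.sum_le_sum fun t _ => ?_
            exact mul_le_mul_of_nonneg_left (ht₀ s t (Finset.mem_univ _)) (hf0 s t)
        _ = ∑ s, d s (t₀ s) := by
            refine Finset.sum_congr rfl fun s _ => ?_
            rw [← Finset.sum_mul, hf1, one_mul]
        _ = ∑ n, ∑ s, p (n, s) * M (h (t₀ s)) n := Finset.sum_comm
    exact key.trans (payoff_le_cValue p M _)

lemma hard_dir {N S T : Type} [Fintype N] [Fintype S] [Fintype T]
    (p : N × S → ℝ) (q : N × T → ℝ) (hp : IsDist p) (hq : IsDist q)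
    (hb : ClBetter p q) :
    ∃ f : S → T → ℝ,
      (∀ s t, 0 ≤ f s t) ∧ (∀ s, ∑ t, f s t = 1) ∧
      (∀ n t, q (n, t) = ∑ s, p (n, s) * f s t) := by
  classical
  obtain ⟨hN, hS⟩ := nonempty_of_isDist hp
  obtain ⟨-, hT⟩ := nonempty_of_isDist hq
  by_contra hne
  -- the set of stochastic matrices
  set Stoch : Set (S → T → ℝ) := Set.univ.pi (fun _ => stdSimplex ℝ T) with hStoch
  -- the linear "pushforward" map
  set Φ : (S → T → ℝ) →ₗ[ℝ] ((N × T) → ℝ) :=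
    { toFun := fun f i => ∑ s, p (i.1, s) * f s i.2
      map_add' := by
        intro f g; funext i
        simp [mul_add, Finset.sum_add_distrib]
      map_smul' := by
        intro r f; funext i
        simp [Finset.mul_sum, mul_left_comm] } with hΦ
  have hΦapp : ∀ f i, Φ f i = ∑ s, p (i.1, s) * f s i.2 := fun f i => rfl
  set C : Set ((N × T) → ℝ) := Φ '' Stoch with hC
  have hqC : q ∉ C := by
    rintro ⟨f, hfS, hfq⟩
    refine hne ⟨f, fun s t => (hfS s (Set.mem_univ s)).1 t,
      fun s => (hfS s (Set.mem_univ s)).2, fun n t => ?_⟩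
    rw [← congr_fun hfq (n, t)]
    exact hΦapp f (n, t)
  have hScomp : IsCompact Stoch := isCompact_univ_pi fun _ => isCompact_stdSimplex ℝ T
  have hSconv : Convex ℝ Stoch := convex_pi fun _ _ => convex_stdSimplex ℝ T
  have hCcomp : IsCompact C := hScomp.image Φ.continuous_of_finiteDimensional
  have hCconv : Convex ℝ C := hSconv.linear_image Φ
  obtain ⟨L, u, hLC, hLq⟩ := geometric_hahn_banach_closed_point hCconv hCcomp.isClosed hqC
  -- represent L by coefficients
  have hL : ∀ x : (N × T) → ℝ, L x = ∑ i, x i * L (Pi.single i 1) := by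
    intro x
    have hx : ∑ i, Pi.single i (x i) = x := Finset.univ_sum_single x
    calc L x = L (∑ i, Pi.single i (x i)) := by rw [hx]
      _ = ∑ i, L (Pi.single i (x i)) := map_sum L _ _
      _ = ∑ i, x i * L (Pi.single i 1) := by
          refine Finset.sum_congr rfl fun i _ => ?_
          have h1 : (Pi.single i (x i) : (N × T) → ℝ) = x i • (Pi.single i (1 : ℝ) : (N × T) → ℝ) := by
            rw [← Pi.single_smul, smul_eq_mul, mul_one]
          rw [h1, map_smul, smul_eq_mul]
  -- the game
  haveI : Nonempty (Fin (Fintype.card T)) := by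
    rw [← Fintype.card_pos_iff]; exact Fintype.card_pos
  set e : Fin (Fintype.card T) ≃ T := (Fintype.equivFin T).symm with he
  set M : Fin (Fintype.card T) → N → ℝ := fun a n => L (Pi.single (n, e a) 1) with hM
  have hgame := hb (Fintype.card T) M
  -- lower bound on cValue q M
  have hlow : L q ≤ cValue q M := by
    have : payoff q M (fun t => e.symm t) = L q := by
      rw [hL q, Fintype.sum_prod_type]
      unfold payoff
      exact Finset.sum_congr rfl fun n _ => Finset.sum_congr rfl fun t _ => by
        rw [hM]; simp
    rw [← this]
    exact payoff_le_cValue q M _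
  -- upper bound on cValue p M
  have hup : cValue p M ≤ u := by
    apply cValue_le
    intro g
    set fg : S → T → ℝ := fun s t => if t = e (g s) then 1 else 0 with hfg
    have hfgS : fg ∈ Stoch := by
      intro s _
      constructor
      · intro t; by_cases h : t = e (g s) <;> simp [hfg, h]
      · simp [hfg]
    have hpay : payoff p M g = L (Φ fg) := by
      rw [hL (Φ fg), Fintype.sum_prod_type]
      unfold payoff
      refine Finset.sum_congr rfl fun n _ => ?_
      calc ∑ s, p (n, s) * M (g s) n
          = ∑ s, ∑ t, (if t = e (g s) then 1 else 0) * (p (n, s) * L (Pi.single (n, t) 1)) := by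
            refine Finset.sum_congr rfl fun s _ => ?_
            simp only [ite_mul, zero_mul, one_mul]
            rw [Finset.sum_ite_eq' Finset.univ (e (g s))
              (fun t => p (n, s) * L (Pi.single (n, t) 1))]
            simp [hM]
        _ = ∑ t, Φ fg (n, t) * L (Pi.single (n, t) 1) := by
            rw [Finset.sum_comm]
            refine Finset.sum_congr rfl fun t _ => ?_
            rw [hΦapp, Finset.sum_mul]
            refine Finset.sum_congr rfl fun s _ => ?_
            by_cases h : t = e (g s) <;> simp [hfg, h]
    have : Φ fg ∈ C := ⟨fg, hfgS, rfl⟩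
    rw [hpay]
    exact (hLC _ this).le
  linarith [hlow.trans (hgame.trans hup)]

theorem classical_blackwell {N S T : Type} [Fintype N] [Fintype S] [Fintype T]
    (p : N × S → ℝ) (q : N × T → ℝ) (hp : IsDist p) (hq : IsDist q) :
    ClBetter p q ↔
      ∃ f : S → T → ℝ,
        (∀ s t, 0 ≤ f s t) ∧ (∀ s, ∑ t, f s t = 1) ∧
        (∀ n t, q (n, t) = ∑ s, p (n, s) * f s t) := by
  constructor
  · exact hard_dir p q hp hq
  · rintro ⟨f, hf0, hf1, hfq⟩
    exact easy_dir p q hp hq f hf0 hf1 hfq
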